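/- Let X be a nonempty finite set and let p, q be probability mass functions on X with p(x) + q(x) > 0 for all x ∈ X, and let m = (p + q)/2 be their midpoint distribution. Then the supremum over all discriminators D : X → ℝ with 0 < D(x) < 1 of the objective J(D) = Σ_{x ∈ X} ( p(x)·log D(x) + q(x)·log(1 − D(x)) ) equals −log 4 + KL(p ‖ m) + KL(q ‖ m), where KL(p ‖ m) = Σ_{x : p(x) > 0} p(x)·log( p(x)/m(x) ); moreover this supremum is attained by D*(x) = p(x)/(p(x)+q(x)). Equivalently, the optimal adversarial objective equals −log 4 plus twice the Jensen–Shannon divergence between p and q. -/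

import Mathlib

open Real Filter Topology

-- Gibbs inequality per point
lemma aux_gibbs (a b t : ℝ) (ha : 0 ≤ a) (hb : 0 ≤ b) (hab : 0 < a + b)
    (ht0 : 0 < t) (ht1 : t < 1) :
    a * Real.log t + b * Real.log (1 - t) ≤
      a * Real.log (a / (a + b)) + b * Real.log (b / (a + b)) := by
  rcases eq_or_lt_of_le ha with h | ha'
  · have hb' : 0 < b := by linarith
    have : b * Real.log (1 - t) ≤ 0 :=
      mul_nonpos_of_nonneg_of_nonpos hb (Real.log_nonpos (by linarith) (by linarith))
    simp [← h, div_self hb'.ne']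
    linarith
  rcases eq_or_lt_of_le hb with h | hb'
  · have : a * Real.log t ≤ 0 :=
      mul_nonpos_of_nonneg_of_nonpos ha (Real.log_nonpos ht0.le ht1.le)
    simp [← h, div_self ha'.ne']
    linarith
  · have h1 : Real.log t - Real.log (a / (a + b)) ≤ t * (a + b) / a - 1 := by
      have hu : 0 < t * (a + b) / a := by positivity
      have := Real.log_le_sub_one_of_pos hu
      rw [Real.log_div (mul_ne_zero ht0.ne' hab.ne') ha'.ne',
        Real.log_mul ht0.ne' hab.ne'] at this
      rw [Real.log_div ha'.ne' hab.ne']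
      linarith
    have h2 : Real.log (1 - t) - Real.log (b / (a + b)) ≤ (1 - t) * (a + b) / b - 1 := by
      have hu : 0 < (1 - t) * (a + b) / b := by
        have ht' : (0:ℝ) < 1 - t := by linarith
        positivity
      have := Real.log_le_sub_one_of_pos hu
      have h1t : (1 - t) ≠ 0 := by linarith
      rw [Real.log_div (mul_ne_zero h1t hab.ne') hb'.ne',
        Real.log_mul h1t hab.ne'] at this
      rw [Real.log_div hb'.ne' hab.ne']
      linarith
    have h1' : a * (Real.log t - Real.log (a / (a + b))) ≤ t * (a + b) - a := by
      calc a * (Real.log t - Real.log (a / (a + b))) ≤ a * (t * (a + b) / a - 1) :=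
            mul_le_mul_of_nonneg_left h1 ha
        _ = t * (a + b) - a := by field_simp
    have h2' : b * (Real.log (1 - t) - Real.log (b / (a + b))) ≤ (1 - t) * (a + b) - b := by
      calc b * (Real.log (1 - t) - Real.log (b / (a + b))) ≤ b * ((1 - t) * (a + b) / b - 1) :=
            mul_le_mul_of_nonneg_left h2 hb
        _ = (1 - t) * (a + b) - b := by field_simp
    nlinarith [h1', h2']

-- limit of one smoothed term
lemma aux_tendsto (a s : ℝ) (ha : 0 ≤ a) (hs : 0 < s) (c : ℝ) :
    Tendsto (fun ε : ℝ => a * Real.log ((a + ε) / (s + c * ε))) (𝓝[>] 0)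
      (𝓝 (a * Real.log (a / s))) := by
  rcases eq_or_lt_of_le ha with h | ha'
  · simp only [← h, zero_mul]
    exact tendsto_const_nhds
  · have hdiv : Tendsto (fun ε : ℝ => (a + ε) / (s + c * ε)) (𝓝 0) (𝓝 (a / s)) := by
      have h1 : Tendsto (fun ε : ℝ => a + ε) (𝓝 0) (𝓝 a) := by
        have hc : Continuous (fun ε : ℝ => a + ε) := by fun_prop
        simpa using hc.tendsto (0:ℝ)
      have h2 : Tendsto (fun ε : ℝ => s + c * ε) (𝓝 0) (𝓝 s) := by
        have hc : Continuous (fun ε : ℝ => s + c * ε) := by fun_prop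
        simpa using hc.tendsto (0:ℝ)
      exact h1.div h2 hs.ne'
    have hlog : Tendsto (fun ε : ℝ => Real.log ((a + ε) / (s + c * ε))) (𝓝 0)
        (𝓝 (Real.log (a / s))) :=
      (Real.continuousAt_log (by positivity)).tendsto.comp hdiv
    exact ((hlog.const_mul a).mono_left nhdsWithin_le_nhds)

theorem adversarial_objective_jensen_shannon
    {X : Type*} [Fintype X] [Nonempty X]
    (p q : X → ℝ)
    (hp0 : ∀ x, 0 ≤ p x) (hq0 : ∀ x, 0 ≤ q x)
    (hp1 : ∑ x, p x = 1) (hq1 : ∑ x, q x = 1)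
    (hpq : ∀ x, 0 < p x + q x) :
    IsLUB
      {v : ℝ | ∃ D : X → ℝ, (∀ x, 0 < D x ∧ D x < 1) ∧
        v = ∑ x, (p x * Real.log (D x) + q x * Real.log (1 - D x))}
      (-Real.log 4 +
        (∑ x, if 0 < p x then p x * Real.log (p x / ((p x + q x) / 2)) else 0) +
        (∑ x, if 0 < q x then q x * Real.log (q x / ((p x + q x) / 2)) else 0)) ∧
    (∑ x, (p x * Real.log (p x / (p x + q x)) +
        q x * Real.log (1 - p x / (p x + q x)))) =
      -Real.log 4 +
        (∑ x, if 0 < p x then p x * Real.log (p x / ((p x + q x) / 2)) else 0) +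
        (∑ x, if 0 < q x then q x * Real.log (q x / ((p x + q x) / 2)) else 0) := by
  set T : ℝ := -Real.log 4 +
      (∑ x, if 0 < p x then p x * Real.log (p x / ((p x + q x) / 2)) else 0) +
      (∑ x, if 0 < q x then q x * Real.log (q x / ((p x + q x) / 2)) else 0) with hT
  set V : ℝ := ∑ x, (p x * Real.log (p x / (p x + q x)) + q x * Real.log (q x / (p x + q x)))
    with hVdef
  -- key pointwise identity rewriting V = T
  have hterm : ∀ x, p x * Real.log (p x / (p x + q x)) =
      (if 0 < p x then p x * Real.log (p x / ((p x + q x) / 2)) else 0) - p x * Real.log 2 := by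
    intro x
    rcases eq_or_lt_of_le (hp0 x) with h | h
    · simp [← h]
    · have hs := hpq x
      have : p x / (p x + q x) = (p x / ((p x + q x) / 2)) / 2 := by
        field_simp
      rw [this, Real.log_div (by positivity) two_ne_zero, if_pos h]
      ring
  have htermq : ∀ x, q x * Real.log (q x / (p x + q x)) =
      (if 0 < q x then q x * Real.log (q x / ((p x + q x) / 2)) else 0) - q x * Real.log 2 := by
    intro x
    rcases eq_or_lt_of_le (hq0 x) with h | h
    · simp [← h]
    · have hs := hpq x
      have : q x / (p x + q x) = (q x / ((p x + q x) / 2)) / 2 := by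
        field_simp
      rw [this, Real.log_div (by positivity) two_ne_zero, if_pos h]
      ring
  have hVT : V = T := by
    rw [hVdef, hT]
    have h4 : Real.log 4 = Real.log 2 + Real.log 2 := by
      rw [← Real.log_mul two_ne_zero two_ne_zero]; norm_num
    calc ∑ x, (p x * Real.log (p x / (p x + q x)) + q x * Real.log (q x / (p x + q x)))
        = ∑ x, (((if 0 < p x then p x * Real.log (p x / ((p x + q x) / 2)) else 0)
              - p x * Real.log 2)
            + ((if 0 < q x then q x * Real.log (q x / ((p x + q x) / 2)) else 0)
              - q x * Real.log 2)) := by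
          apply Finset.sum_congr rfl; intro x _; rw [hterm x, htermq x]
      _ = (∑ x, if 0 < p x then p x * Real.log (p x / ((p x + q x) / 2)) else 0)
            + (∑ x, if 0 < q x then q x * Real.log (q x / ((p x + q x) / 2)) else 0)
            - (∑ x, p x) * Real.log 2 - (∑ x, q x) * Real.log 2 := by
          simp [Finset.sum_add_distrib, Finset.sum_sub_distrib, Finset.sum_mul]
          ring
      _ = _ := by rw [hp1, hq1, h4]; ring
  constructor
  · constructor
    · -- upper bound
      rintro v ⟨D, hD, rfl⟩
      rw [← hVT, hVdef]
      apply Finset.sum_le_sum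
      intro x _
      exact aux_gibbs (p x) (q x) (D x) (hp0 x) (hq0 x) (hpq x) (hD x).1 (hD x).2
    · -- least
      intro b hb
      rw [← hVT]
      have hne : (𝓝[>] (0:ℝ)).NeBot := inferInstance
      set f : ℝ → ℝ := fun ε => ∑ x, (p x * Real.log ((p x + ε) / (p x + q x + 2 * ε))
          + q x * Real.log ((q x + ε) / (p x + q x + 2 * ε))) with hf
      have htend : Tendsto f (𝓝[>] 0) (𝓝 V) := by
        rw [hVdef]
        apply tendsto_finset_sum
        intro x _
        have h1 := aux_tendsto (p x) (p x + q x) (hp0 x) (hpq x) 2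
        have h2 : Tendsto (fun ε : ℝ => q x * Real.log ((q x + ε) / (p x + q x + 2 * ε)))
            (𝓝[>] 0) (𝓝 (q x * Real.log (q x / (p x + q x)))) := by
          have := aux_tendsto (q x) (p x + q x) (hq0 x) (hpq x) 2
          exact this
        exact h1.add h2
      have hev : ∀ᶠ ε in 𝓝[>] (0:ℝ), f ε ≤ b := by
        filter_upwards [self_mem_nhdsWithin] with ε (hε : 0 < ε)
        apply hb
        refine ⟨fun x => (p x + ε) / (p x + q x + 2 * ε), ?_, ?_⟩
        · intro x
          have hs : 0 < p x + q x + 2 * ε := by have := hpq x; linarith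
          constructor
          · have : 0 < p x + ε := by have := hp0 x; linarith
            positivity
          · rw [div_lt_one hs]
            have := hq0 x; linarith
        · rw [hf]
          apply Finset.sum_congr rfl
          intro x _
          have hs : (0:ℝ) < p x + q x + 2 * ε := by have := hpq x; linarith
          have : 1 - (p x + ε) / (p x + q x + 2 * ε) = (q x + ε) / (p x + q x + 2 * ε) := by
            rw [eq_div_iff hs.ne', sub_mul, div_mul_cancel₀ _ hs.ne']; ring
          rw [this]
      exact le_of_tendsto htend hev
  · -- the attainment equation
    rw [← hVT, hVdef]
    apply Finset.sum_congr rfl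
    intro x _
    have hs := hpq x
    have : 1 - p x / (p x + q x) = q x / (p x + q x) := by
      field_simp
      ring
    rw [this]
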